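/- arXiv:1005.4470 — 2 statements merged into one kernel-verified Lean document; each statement's English description precedes it below -/
import Mathlib

section
/- Define a function c on finite graphs by the recursion: c(G) = 0 if some edge of G is a bridge; c(G) = −c(G∖e) if e is a non-bridge edge of G; c(G) = 1 if G has no edges. Then c is well-defined and for every graph G, c(G) = 0 if G has an edge that is not a looping edge, and c(G) = (−1)^n if G consists of n looping edges (and isolated vertices) only. -/
open scoped Classical

/-- A finite multigraph: finite vertex and edge types, each edge assigned an
unordered pair of endpoints (allowing loops and parallel edges). -/
structure Multigraph where
  V : Type
  E : Type
  [fintypeV : Fintype V]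
  [fintypeE : Fintype E]
  ends : E → Sym2 V

namespace Multigraph

attribute [instance] fintypeV fintypeE

variable (G : Multigraph)

/-- `a` and `b` are joined by a walk using only edges in `S`. -/
def Reach (S : Set G.E) (a b : G.V) : Prop :=
  Relation.ReflTransGen (fun x y => ∃ e ∈ S, G.ends e = s(x, y)) a b

/-- `G` is connected. -/
def Connected : Prop := ∀ a b : G.V, G.Reach Set.univ a b

/-- A looping edge: both endpoints coincide. -/
def IsLoop (e : G.E) : Prop := (G.ends e).IsDiag

/-- A bridge: its endpoints cannot be joined avoiding the edge itself
(so that deleting it disconnects its component). -/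
def IsBridge (e : G.E) : Prop :=
  ∀ a b : G.V, G.ends e = s(a, b) → ¬ G.Reach {e' | e' ≠ e} a b

/-- A spanning forest: an acyclic edge set realizing the connectivity of `G`
(equivalently, a choice of spanning tree in each connected component). -/
def IsSpanningForest (S : Finset G.E) : Prop :=
  (∀ e ∈ S, ∀ a b : G.V, G.ends e = s(a, b) → ¬ G.Reach (↑S \ {e} : Set G.E) a b) ∧
  (∀ a b : G.V, G.Reach Set.univ a b → G.Reach (↑S : Set G.E) a b)

/-- The graph (Kirchhoff–Symanzik) polynomial
`ψ_G = ∑_{T spanning forest} ∏_{e ∉ T} t_e`. -/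
noncomputable def psi : MvPolynomial G.E ℤ :=
  ∑ S : Finset G.E, if G.IsSpanningForest S then
    ∏ e : G.E, (if e ∈ S then 1 else MvPolynomial.X e) else 0

/-- Deletion of an edge. -/
noncomputable def delete (e : G.E) : Multigraph where
  V := G.V
  E := {e' : G.E // e' ≠ e}
  fintypeE := Fintype.ofFinite _
  ends := fun e' => G.ends e'.1

/-- The setoid identifying the endpoints of `e`. -/
def contractSetoid (e : G.E) : Setoid G.V :=
  ⟨Relation.EqvGen (fun a b => G.ends e = s(a, b)), Relation.EqvGen.is_equivalence _⟩

/-- Contraction of an edge: identify its endpoints and remove the edge. -/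
noncomputable def contract (e : G.E) : Multigraph where
  V := Quotient (G.contractSetoid e)
  E := {e' : G.E // e' ≠ e}
  fintypeV := Fintype.ofFinite _
  fintypeE := Fintype.ofFinite _
  ends := fun e' => (G.ends e'.1).map (Quotient.mk (G.contractSetoid e))

/-- The setoid of connectivity in `G`. -/
def componentSetoid : Setoid G.V :=
  ⟨Relation.EqvGen (fun a b => ∃ e : G.E, G.ends e = s(a, b)), Relation.EqvGen.is_equivalence _⟩

/-- The number of connected components of `G`. -/
noncomputable def b0 : ℕ := Fintype.card (Quotient G.componentSetoid)

/-- Disjoint union of graphs. -/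
def disjUnion (G₁ G₂ : Multigraph) : Multigraph where
  V := G₁.V ⊕ G₂.V
  E := G₁.E ⊕ G₂.E
  ends := Sum.elim (fun e => (G₁.ends e).map Sum.inl) (fun e => (G₂.ends e).map Sum.inr)

end Multigraph

/-- The defining recursion for `c`: `c(G) = 0` if `G` has a bridge,
`c(G) = -c(G∖e)` for `e` a non-bridge edge, and `c(G) = 1` if `G` has no edges. -/
def SatisfiesRec (c : Multigraph → ℤ) : Prop :=
  (∀ G : Multigraph, (∃ e : G.E, G.IsBridge e) → c G = 0) ∧
  (∀ (G : Multigraph) (e : G.E), ¬ G.IsBridge e → c G = - c (G.delete e)) ∧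
  (∀ G : Multigraph, IsEmpty G.E → c G = 1)

noncomputable def myc (G : Multigraph) : ℤ :=
  if ∀ e : G.E, G.IsLoop e then (-1) ^ Fintype.card G.E else 0

namespace Multigraph

lemma reach_eq_of_loops (G : Multigraph) {S : Set G.E} (h : ∀ e ∈ S, G.IsLoop e)
    {a b : G.V} (hr : G.Reach S a b) : a = b := by
  induction hr with
  | refl => rfl
  | tail _ hstep ih =>
    obtain ⟨e, heS, hends⟩ := hstep
    have hl := h e heS
    rw [IsLoop, hends, Sym2.mk_isDiag_iff] at hl
    exact ih.trans hl

lemma not_isBridge_of_isLoop (G : Multigraph) {e : G.E} (h : G.IsLoop e) :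
    ¬ G.IsBridge e := by
  obtain ⟨v, hv⟩ : ∃ v, Sym2.diag v = G.ends e := ⟨_, Sym2.diag_diagElem h⟩
  rw [IsBridge]
  push_neg
  exact ⟨v, v, by rw [← hv]; rfl, Relation.ReflTransGen.refl⟩

lemma exists_companion (G : Multigraph) {e : G.E} (hl : ¬ G.IsLoop e)
    (hb : ¬ G.IsBridge e) : ∃ e' : G.E, e' ≠ e ∧ ¬ G.IsLoop e' := by
  rw [IsBridge] at hb
  push_neg at hb
  obtain ⟨a, b, hends, hr⟩ := hb
  by_contra hall
  push_neg at hall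
  have : a = b := G.reach_eq_of_loops (fun e' he' => hall e' he') hr
  apply hl
  rw [IsLoop, hends, Sym2.mk_isDiag_iff, this]

lemma card_delete (G : Multigraph) (e : G.E) :
    Fintype.card (G.delete e).E = Fintype.card G.E - 1 := by
  rw [show Fintype.card (G.delete e).E = Fintype.card {e' : G.E // e' ≠ e} from
    Fintype.card_congr (Equiv.refl _)]
  simp [Fintype.card_subtype_compl, Fintype.card_subtype_eq]

lemma delete_isLoop (G : Multigraph) (e : G.E) (e' : (G.delete e).E) :
    (G.delete e).IsLoop e' ↔ G.IsLoop e'.1 := Iff.rfl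

end Multigraph

lemma myc_delete (G : Multigraph) (e : G.E) (he : ¬ G.IsBridge e) :
    myc G = - myc (G.delete e) := by
  have hcard : 0 < Fintype.card G.E := Fintype.card_pos_iff.mpr ⟨e⟩
  by_cases hall : ∀ f : G.E, G.IsLoop f
  · have hall' : ∀ f : (G.delete e).E, (G.delete e).IsLoop f := fun f => hall f.1
    obtain ⟨m, hm⟩ : ∃ m, Fintype.card G.E = m + 1 := ⟨_, (Nat.succ_pred_eq_of_pos hcard).symm⟩
    rw [myc, myc, if_pos hall, if_pos hall', G.card_delete e, hm, Nat.add_sub_cancel, pow_succ]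
    ring
  · push_neg at hall
    obtain ⟨f, hf⟩ := hall
    have h1 : myc G = 0 := by rw [myc, if_neg]; push_neg; exact ⟨f, hf⟩
    have h2 : myc (G.delete e) = 0 := by
      rw [myc, if_neg]
      push_neg
      by_cases hfe : f = e
      · obtain ⟨e', he', hl'⟩ := G.exists_companion (hfe ▸ hf) he
        exact ⟨⟨e', he'⟩, hl'⟩
      · exact ⟨⟨f, hfe⟩, hf⟩
    rw [h1, h2]; ring

lemma myc_satisfies : SatisfiesRec myc := by
  refine ⟨?_, ?_, ?_⟩
  · rintro G ⟨e, he⟩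
    rw [myc, if_neg]
    push_neg
    refine ⟨e, fun hl => G.not_isBridge_of_isLoop hl he⟩
  · exact fun G e he => myc_delete G e he
  · intro G hE
    rw [myc, if_pos (fun e => (hE.false e).elim)]
    simp

lemma eq_myc (c : Multigraph → ℤ) (hc : SatisfiesRec c) : ∀ (n : ℕ) (G : Multigraph),
    Fintype.card G.E = n → c G = myc G := by
  intro n
  induction n with
  | zero =>
    intro G hG
    have hE : IsEmpty G.E := by rwa [← Fintype.card_eq_zero_iff]
    rw [hc.2.2 G hE, myc, if_pos (fun e => (hE.false e).elim), hG]
    simp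
  | succ n ih =>
    intro G hG
    by_cases hb : ∃ e : G.E, G.IsBridge e
    · rw [hc.1 G hb, myc, if_neg]
      push_neg
      obtain ⟨e, he⟩ := hb
      exact ⟨e, fun hl => G.not_isBridge_of_isLoop hl he⟩
    · push_neg at hb
      have hne : Nonempty G.E := by
        rw [← Fintype.card_pos_iff, hG]; omega
      obtain ⟨e⟩ := hne
      rw [hc.2.1 G e (hb e), ih (G.delete e) (by rw [G.card_delete e, hG]; omega),
        myc_delete G e (hb e)]

/-- The recursion `c(G) = 0` if `G` has a bridge, `c(G) = -c(G∖e)` for a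
non-bridge edge `e`, `c(∅) = 1` determines a well-defined function on graphs,
which vanishes on graphs with a non-looping edge and equals `(-1)ⁿ` on graphs
with exactly `n` edges, all of them loops. -/
theorem rec_welldefined_and_values :
    (∃ c : Multigraph → ℤ, SatisfiesRec c) ∧
    (∀ c : Multigraph → ℤ, SatisfiesRec c → ∀ G : Multigraph,
      ((∃ e : G.E, ¬ G.IsLoop e) → c G = 0) ∧
      ((∀ e : G.E, G.IsLoop e) → c G = (-1) ^ Fintype.card G.E)) := by
  constructor
  · exact ⟨myc, myc_satisfies⟩
  · intro c hc G
    have h := eq_myc c hc (Fintype.card G.E) G rfl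
    constructor
    · rintro ⟨e, he⟩
      rw [h, myc, if_neg]
      push_neg
      exact ⟨e, he⟩
    · intro hall
      rw [h, myc, if_pos hall]
end

section
/- Let G be a finite graph with at least one non-looping edge. Then by repeatedly deleting non-bridge edges one can reach a graph containing a bridge; consequently, any function c on graphs satisfying c(G)=0 when G has a bridge and c(G)=−c(G∖e) for e a non-bridge non-loop edge must satisfy c(G)=0. -/
open scoped Classical

/-- One step of deleting a non-bridge edge. -/
def DelStep (G H : Multigraph) : Prop :=
  ∃ e : G.E, ¬ G.IsBridge e ∧ H = G.delete e

lemma exists_nonloop_of_reach (G : Multigraph) (S : Set G.E) {a b : G.V}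
    (h : G.Reach S a b) : a ≠ b → ∃ e ∈ S, ¬ G.IsLoop e := by
  induction h with
  | refl => intro hab; exact absurd rfl hab
  | @tail x y _ hxy ih =>
    intro hab
    by_cases hxy' : x = y
    · exact ih (hxy' ▸ hab)
    · obtain ⟨e, heS, he⟩ := hxy
      refine ⟨e, heS, ?_⟩
      rw [Multigraph.IsLoop, he, Sym2.mk_isDiag_iff]
      exact hxy'

/-- If `G` has a non-looping edge, then by repeatedly deleting non-bridge edges
one reaches a graph containing a bridge; consequently any function `c` with
`c = 0` on graphs with a bridge and `c(G) = -c(G∖e)` for `e` a non-bridge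
non-loop edge satisfies `c(G) = 0`. -/
theorem delete_to_bridge_and_vanishing (G : Multigraph)
    (h : ∃ e : G.E, ¬ G.IsLoop e) :
    (∃ H : Multigraph, Relation.ReflTransGen DelStep G H ∧ ∃ e : H.E, H.IsBridge e) ∧
    (∀ c : Multigraph → ℤ,
      (∀ K : Multigraph, (∃ e : K.E, K.IsBridge e) → c K = 0) →
      (∀ (K : Multigraph) (e : K.E), ¬ K.IsBridge e → ¬ K.IsLoop e →
        c K = - c (K.delete e)) →
      c G = 0) := by
  suffices H : ∀ n (G : Multigraph), Fintype.card G.E ≤ n →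
      (∃ e : G.E, ¬ G.IsLoop e) →
      (∃ H : Multigraph, Relation.ReflTransGen DelStep G H ∧ ∃ e : H.E, H.IsBridge e) ∧
      (∀ c : Multigraph → ℤ,
        (∀ K : Multigraph, (∃ e : K.E, K.IsBridge e) → c K = 0) →
        (∀ (K : Multigraph) (e : K.E), ¬ K.IsBridge e → ¬ K.IsLoop e →
          c K = - c (K.delete e)) →
        c G = 0) by
    exact H _ G le_rfl h
  intro n
  induction n with
  | zero =>
    rintro G hle ⟨e, -⟩
    exact absurd (Fintype.card_pos_iff.mpr ⟨e⟩) (by omega)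
  | succ n ih =>
    rintro G hle ⟨e, hloop⟩
    by_cases hb : G.IsBridge e
    · exact ⟨⟨G, .refl, e, hb⟩, fun c h0 _ => h0 G ⟨e, hb⟩⟩
    · have hb' := hb
      unfold Multigraph.IsBridge at hb'
      push_neg at hb'
      obtain ⟨a, b, hends, hreach⟩ := hb'
      have hab : a ≠ b := by
        rintro rfl
        exact hloop (by rw [Multigraph.IsLoop, hends]; exact Sym2.mk_isDiag_iff.mpr rfl)
      obtain ⟨e', he'S, he'⟩ := exists_nonloop_of_reach G _ hreach hab
      have hne : e' ≠ e := he'S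
      have hcard : Fintype.card (G.delete e).E ≤ n := by
        have hlt : Fintype.card (G.delete e).E < Fintype.card G.E :=
          Fintype.card_lt_of_injective_of_notMem (Subtype.val) Subtype.val_injective
            (by rintro ⟨⟨e₀, h₀⟩, rfl⟩; exact h₀ rfl)
        omega
      have hnl : ∃ e₀ : (G.delete e).E, ¬ (G.delete e).IsLoop e₀ := ⟨⟨e', hne⟩, he'⟩
      obtain ⟨⟨H, hHsteps, hHbridge⟩, hc⟩ := ih (G.delete e) hcard hnl
      refine ⟨⟨H, .head ⟨e, hb, rfl⟩ hHsteps, hHbridge⟩, ?_⟩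
      intro c h0 hrec
      rw [hrec G e hb hloop, hc c h0 hrec, neg_zero]
end
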